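/- For a word u = (u_1,…,u_h) of positive integers, let r(u) = #{i : u_i ≥ 2}. There is a constant c > 0 such that for all x ≥ 1 and all u in the set E_x(γ) = {u : x ∏_{∅≺v⪯u} γ(v)/2 ≥ 1}, where γ(u) = (4/3)^{−∑(u_i−1)}, one has r(u) ≤ c√(log x). -/
import Mathlib

private def S16 (u : List ℕ) : ℕ := (u.map (fun i => i - 1)).sum

private def F16 (u : List ℕ) : ℕ :=
  ∑ j ∈ Finset.range u.length, S16 (u.take (j + 1))

private lemma F16_cons (a : ℕ) (t : List ℕ) :
    F16 (a :: t) = (t.length + 1) * (a - 1) + F16 t := by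
  have h : ∀ j, S16 ((a :: t).take (j + 1)) = (a - 1) + S16 (t.take j) := by
    intro j; simp [S16]
  unfold F16
  simp only [List.length_cons, h]
  rw [Finset.sum_range_succ']
  simp [Finset.sum_add_distrib, S16]
  ring

private lemma key16 (u : List ℕ) (hu : ∀ i ∈ u, 1 ≤ i) :
    (u.filter (fun i => 2 ≤ i)).length * ((u.filter (fun i => 2 ≤ i)).length + 1)
      ≤ 2 * F16 u := by
  induction u with
  | nil => simp [F16]
  | cons a t ih =>
    have ht : ∀ i ∈ t, 1 ≤ i := fun i hi => hu i (List.mem_cons_of_mem _ hi)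
    have ih' := ih ht
    have hr : (t.filter (fun i => 2 ≤ i)).length ≤ t.length :=
      List.length_filter_le _ _
    rw [F16_cons]
    by_cases h2 : 2 ≤ a
    · rw [List.filter_cons_of_pos (by simpa using h2)]
      simp only [List.length_cons]
      have h1 : 1 ≤ a - 1 := by omega
      nlinarith [h1, hr, ih']
    · rw [List.filter_cons_of_neg (by simpa using h2)]
      have : a - 1 = 0 := by omega
      simpa [this] using ih'

/-- For words `u` of positive integers, let `r(u)` be the number of letters
that are `≥ 2`, and let `γ(u) = (4/3)^{-∑ (u_i - 1)}`. There is a constant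
`c > 0` such that for all `x ≥ 1`, every word `u` in
`E_x(γ) = {u : x ∏_{∅ ≺ v ⪯ u} γ(v)/2 ≥ 1}` satisfies `r(u) ≤ c √(log x)`. -/
theorem stmt16 :
    ∃ c : ℝ, 0 < c ∧ ∀ x : ℝ, 1 ≤ x → ∀ u : List ℕ, (∀ i ∈ u, 1 ≤ i) →
      1 ≤ x * ∏ j ∈ Finset.range u.length,
            ((4 / 3 : ℝ) ^ (-((((u.take (j + 1)).map (fun i => i - 1)).sum : ℕ) : ℤ)) / 2) →
      ((u.filter (fun i => 2 ≤ i)).length : ℝ) ≤ c * Real.sqrt (Real.log x) := by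
  have hlog : (0 : ℝ) < Real.log (4 / 3) := Real.log_pos (by norm_num)
  refine ⟨Real.sqrt (2 / Real.log (4 / 3)), Real.sqrt_pos.mpr (by positivity), ?_⟩
  intro x hx u hu hprod
  set r := (u.filter (fun i => 2 ≤ i)).length with hrdef
  set T := F16 u with hTdef
  -- bound the product by (3/4)^T
  have hple : ∏ j ∈ Finset.range u.length,
      ((4 / 3 : ℝ) ^ (-((((u.take (j + 1)).map (fun i => i - 1)).sum : ℕ) : ℤ)) / 2)
      ≤ (3 / 4 : ℝ) ^ T := by
    have hbound : ∀ j ∈ Finset.range u.length,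
        ((4 / 3 : ℝ) ^ (-((((u.take (j + 1)).map (fun i => i - 1)).sum : ℕ) : ℤ)) / 2)
        ≤ (3 / 4 : ℝ) ^ (S16 (u.take (j + 1))) := by
      intro j _
      have heq : ((4 / 3 : ℝ) ^ (-((((u.take (j + 1)).map (fun i => i - 1)).sum : ℕ) : ℤ)))
          = (3 / 4 : ℝ) ^ (S16 (u.take (j + 1))) := by
        rw [zpow_neg, zpow_natCast, ← inv_pow]
        norm_num [S16]
      rw [heq]
      have : (0:ℝ) < (3 / 4 : ℝ) ^ (S16 (u.take (j + 1))) := by positivity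
      linarith
    calc ∏ j ∈ Finset.range u.length,
          ((4 / 3 : ℝ) ^ (-((((u.take (j + 1)).map (fun i => i - 1)).sum : ℕ) : ℤ)) / 2)
        ≤ ∏ j ∈ Finset.range u.length, (3 / 4 : ℝ) ^ (S16 (u.take (j + 1))) := by
          apply Finset.prod_le_prod
          · intro j _; positivity
          · exact hbound
      _ = (3 / 4 : ℝ) ^ T := by
          rw [Finset.prod_pow_eq_pow_sum]; rfl
  have hp : (0:ℝ) < (3 / 4 : ℝ) ^ T := by positivity
  have hchain : 1 ≤ x * (3 / 4 : ℝ) ^ T := by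
    calc (1:ℝ) ≤ x * _ := hprod
      _ ≤ x * (3 / 4 : ℝ) ^ T := by
          apply mul_le_mul_of_nonneg_left hple (by linarith)
  have hid : (4 / 3 : ℝ) ^ T * (3 / 4 : ℝ) ^ T = 1 := by
    rw [← mul_pow]; norm_num
  have h43 : (4 / 3 : ℝ) ^ T ≤ x :=
    le_of_mul_le_mul_right (by rw [hid]; exact hchain) hp
  have hlogT : (T : ℝ) * Real.log (4 / 3) ≤ Real.log x := by
    have := Real.log_le_log (by positivity) h43
    rwa [Real.log_pow] at this
  have hkey : (r : ℝ) * (r + 1) ≤ 2 * T := by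
    exact_mod_cast key16 u hu
  have hr2 : (r : ℝ) ^ 2 ≤ (2 / Real.log (4 / 3)) * Real.log x := by
    have hT : (T : ℝ) ≤ Real.log x / Real.log (4 / 3) :=
      (le_div_iff₀ hlog).mpr hlogT
    have h1 : (r : ℝ) ^ 2 ≤ (r : ℝ) * (r + 1) := by nlinarith [Nat.cast_nonneg (α := ℝ) r]
    calc (r : ℝ) ^ 2 ≤ 2 * T := by linarith
      _ ≤ 2 * (Real.log x / Real.log (4 / 3)) := by linarith
      _ = (2 / Real.log (4 / 3)) * Real.log x := by ring
  have hlx : 0 ≤ Real.log x := Real.log_nonneg hx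
  calc (r : ℝ) = Real.sqrt ((r : ℝ) ^ 2) := (Real.sqrt_sq (Nat.cast_nonneg r)).symm
    _ ≤ Real.sqrt ((2 / Real.log (4 / 3)) * Real.log x) := Real.sqrt_le_sqrt hr2
    _ = Real.sqrt (2 / Real.log (4 / 3)) * Real.sqrt (Real.log x) :=
        Real.sqrt_mul (by positivity) _
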